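/- Let r be an even integer ≥ 4. The group with presentation ⟨s₁, s₂, s₃ | sᵢ² = 1 (1 ≤ i ≤ 3), (s₂s₃)^r = 1, (s₁s₂)² = (s₁s₃)² = (s₂s₃)^(r/2)⟩ has order 4r and is isomorphic to a semidirect product D_r ⋊ C₂, where D_r is the dihedral group of order 2r. -/

import Mathlib

namespace Stmt5Aux

lemma pow_mod_eq {G : Type*} [Group G] {g : G} {m : ℕ} (h : g ^ m = 1) (n : ℕ) :
    g ^ (n % m) = g ^ n := by
  conv_rhs => rw [← Nat.div_add_mod n m, pow_add, pow_mul, h, one_pow, one_mul]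

/-- underlying function of the automorphism of the dihedral group -/
def dAutFun (r : ℕ) : DihedralGroup r → DihedralGroup r
  | .r i => .r i
  | .sr i => .sr (i + ((r / 2 : ℕ) : ZMod r))

/-- inverse -/
def dAutInv (r : ℕ) : DihedralGroup r → DihedralGroup r
  | .r i => .r i
  | .sr i => .sr (i - ((r / 2 : ℕ) : ZMod r))

/-- the automorphism of the dihedral group fixing rotations -/
def dAut (r : ℕ) : MulAut (DihedralGroup r) where
  toFun := dAutFun r
  invFun := dAutInv r
  left_inv := by rintro (i | i) <;> simp [dAutFun, dAutInv]
  right_inv := by rintro (i | i) <;> simp [dAutFun, dAutInv]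
  map_mul' := by
    rintro (i | i) (j | j) <;>
      simp only [DihedralGroup.r_mul_r, DihedralGroup.r_mul_sr, DihedralGroup.sr_mul_r,
        DihedralGroup.sr_mul_sr, dAutFun] <;> (congr 1; ring)

@[simp] lemma dAut_r (r : ℕ) (i : ZMod r) : dAut r (.r i) = .r i := rfl
@[simp] lemma dAut_sr (r : ℕ) (i : ZMod r) :
    dAut r (.sr i) = .sr (i + ((r / 2 : ℕ) : ZMod r)) := rfl

lemma dAut_sq {r : ℕ} (hre : Even r) : dAut r ^ 2 = 1 := by
  obtain ⟨k, hk⟩ := hre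
  have hk2 : r / 2 = k := by omega
  have hc : ((r / 2 : ℕ) : ZMod r) + ((r / 2 : ℕ) : ZMod r) = 0 := by
    rw [hk2, ← Nat.cast_add, ← hk, ZMod.natCast_self]
  ext d
  rcases d with i | i
  · rfl
  · show dAut r (dAut r (.sr i)) = .sr i
    rw [dAut_sr, dAut_sr, add_assoc, hc, add_zero]

/-- hom from C2 determined by an involution -/
def c2Hom {G : Type*} [Group G] (σ : G) (hσ : σ ^ 2 = 1) : Multiplicative (ZMod 2) →* G where
  toFun x := σ ^ (Multiplicative.toAdd x).val
  map_one' := by simp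
  map_mul' x y := by
    show σ ^ ((Multiplicative.toAdd x + Multiplicative.toAdd y).val) = _
    rw [ZMod.val_add, pow_mod_eq hσ, pow_add]

@[simp] lemma c2Hom_apply {G : Type*} [Group G] (σ : G) (hσ : σ ^ 2 = 1)
    (x : Multiplicative (ZMod 2)) : c2Hom σ hσ x = σ ^ (Multiplicative.toAdd x).val := rfl

lemma c2Hom_ofAdd_one {G : Type*} [Group G] (σ : G) (hσ : σ ^ 2 = 1) :
    c2Hom σ hσ (Multiplicative.ofAdd 1) = σ := pow_one σ

/-- the function underlying the hom from the dihedral group -/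
def dhFun {G : Type*} [Group G] {r : ℕ} (τ ρ : G) : DihedralGroup r → G
  | .r i => ρ ^ i.val
  | .sr i => τ * ρ ^ i.val

/-- hom from the dihedral group determined by a reflection and rotation -/
def dihedralHom {G : Type*} [Group G] {r : ℕ} [NeZero r] (τ ρ : G)
    (hτ : τ * τ = 1) (hρ : ρ ^ r = 1) (hc : τ * ρ * τ = ρ⁻¹) :
    DihedralGroup r →* G where
  toFun := dhFun τ ρ
  map_one' := by show ρ ^ (0 : ZMod r).val = 1; rw [ZMod.val_zero, pow_zero]
  map_mul' := by
    have hτ' : τ⁻¹ = τ := inv_eq_of_mul_eq_one_right hτ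
    have key : ∀ i j : ZMod r, ρ ^ (i + j).val = ρ ^ i.val * ρ ^ j.val := fun i j => by
      rw [ZMod.val_add, pow_mod_eq hρ, pow_add]
    have conj : ∀ n : ℕ, τ * ρ ^ n * τ = (ρ ^ n)⁻¹ := fun n => by
      have h1 : τ * ρ ^ n * τ⁻¹ = (τ * ρ * τ⁻¹) ^ n := (conj_pow).symm
      rw [hτ'] at h1
      rw [h1, hc, inv_pow]
    have swap : ∀ n : ℕ, ρ ^ n * τ = τ * (ρ ^ n)⁻¹ := fun n => by
      calc ρ ^ n * τ = (τ * τ) * (ρ ^ n * τ) := by rw [hτ, one_mul]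
        _ = τ * (τ * ρ ^ n * τ) := by group
        _ = τ * (ρ ^ n)⁻¹ := by rw [conj n]
    have sub : ∀ i j : ZMod r, ρ ^ (j - i).val = (ρ ^ i.val)⁻¹ * ρ ^ j.val := fun i j => by
      have h1 : ρ ^ j.val = ρ ^ (j - i).val * ρ ^ i.val := by
        rw [← key (j - i) i, sub_add_cancel]
      have h2 : ρ ^ (j - i).val = ρ ^ j.val * (ρ ^ i.val)⁻¹ := by
        rw [h1, mul_inv_cancel_right]
      rw [h2, (((Commute.refl ρ).pow_pow j.val i.val).inv_right).eq]
    rintro (i | i) (j | j) <;>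
      simp only [DihedralGroup.r_mul_r, DihedralGroup.r_mul_sr, DihedralGroup.sr_mul_r,
        DihedralGroup.sr_mul_sr, dhFun]
    · exact key i j
    · -- τ * ρ ^ (j - i).val = ρ ^ i.val * (τ * ρ ^ j.val)
      rw [sub i j, ← mul_assoc, ← mul_assoc, swap i.val, mul_assoc]
    · rw [key i j, mul_assoc]
    · rw [sub i j, ← mul_assoc, conj i.val]

@[simp] lemma dihedralHom_r {G : Type*} [Group G] {r : ℕ} [NeZero r] (τ ρ : G)
    (hτ : τ * τ = 1) (hρ : ρ ^ r = 1) (hc : τ * ρ * τ = ρ⁻¹) (i : ZMod r) :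
    dihedralHom τ ρ hτ hρ hc (.r i) = ρ ^ i.val := rfl

@[simp] lemma dihedralHom_sr {G : Type*} [Group G] {r : ℕ} [NeZero r] (τ ρ : G)
    (hτ : τ * τ = 1) (hρ : ρ ^ r = 1) (hc : τ * ρ * τ = ρ⁻¹) (i : ZMod r) :
    dihedralHom τ ρ hτ hρ hc (.sr i) = τ * ρ ^ i.val := rfl

end Stmt5Aux

def stmt5Rels (r : ℕ) : Set (FreeGroup (Fin 3)) :=
  let s : Fin 3 → FreeGroup (Fin 3) := FreeGroup.of
  { s 0 ^ 2, s 1 ^ 2, s 2 ^ 2, (s 1 * s 2) ^ r,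
    (s 0 * s 1) ^ 2 * ((s 1 * s 2) ^ (r / 2))⁻¹,
    (s 0 * s 2) ^ 2 * ((s 1 * s 2) ^ (r / 2))⁻¹ }

theorem stmt_5 (r : ℕ) (hr : 4 ≤ r) (hre : Even r) :
    Nat.card (PresentedGroup (stmt5Rels r)) = 4 * r ∧
    ∃ φ : Multiplicative (ZMod 2) →* MulAut (DihedralGroup r),
      Nonempty (PresentedGroup (stmt5Rels r) ≃*
        SemidirectProduct (DihedralGroup r) (Multiplicative (ZMod 2)) φ) := by
  haveI : NeZero r := ⟨by omega⟩
  haveI : Fact (1 < r) := ⟨by omega⟩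
  have hdiv : 2 * (r / 2) = r := by
    obtain ⟨k, hk⟩ := hre; omega
  have hd2 : Stmt5Aux.dAut r ^ 2 = 1 := Stmt5Aux.dAut_sq hre
  set φ : Multiplicative (ZMod 2) →* MulAut (DihedralGroup r) :=
    Stmt5Aux.c2Hom (Stmt5Aux.dAut r) hd2 with hφdef
  have hφ1 : φ (Multiplicative.ofAdd 1) = Stmt5Aux.dAut r :=
    Stmt5Aux.c2Hom_ofAdd_one _ _
  set gg : Multiplicative (ZMod 2) := Multiplicative.ofAdd 1 with hggdef
  have hggsq : gg * gg = 1 := by rw [hggdef]; decide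
  set c : ZMod r := ((r / 2 : ℕ) : ZMod r) with hcdef
  set f : Fin 3 → (DihedralGroup r ⋊[φ] Multiplicative (ZMod 2)) := fun k =>
    if k = 0 then SemidirectProduct.inr gg
    else if k = 1 then SemidirectProduct.inl (.sr 0)
    else SemidirectProduct.inl (.sr 1) with hfdef
  have hf0 : f 0 = SemidirectProduct.inr gg := rfl
  have hf1 : f 1 = SemidirectProduct.inl (.sr 0) := rfl
  have hf2 : f 2 = SemidirectProduct.inl (.sr 1) := rfl
  have hA : ∀ i : ZMod r,
      (SemidirectProduct.inr gg * SemidirectProduct.inl (DihedralGroup.sr i) :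
          DihedralGroup r ⋊[φ] Multiplicative (ZMod 2)) ^ 2 =
        SemidirectProduct.inl (DihedralGroup.r c) := by
    intro i
    rw [sq]
    refine SemidirectProduct.ext ?_ ?_
    · simp only [SemidirectProduct.mul_left, SemidirectProduct.mul_right,
        SemidirectProduct.left_inl, SemidirectProduct.right_inl, SemidirectProduct.left_inr,
        SemidirectProduct.right_inr, one_mul, mul_one, map_one, hφ1,
        Stmt5Aux.dAut_sr, DihedralGroup.sr_mul_sr]
      congr 1
      ring
    · simp only [SemidirectProduct.mul_right, SemidirectProduct.right_inl,
        SemidirectProduct.right_inr, SemidirectProduct.left_inl, mul_one, one_mul, hggsq]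
  have hB : ((SemidirectProduct.inl (DihedralGroup.sr 0) *
        SemidirectProduct.inl (DihedralGroup.sr 1) :
          DihedralGroup r ⋊[φ] Multiplicative (ZMod 2))) ^ (r / 2) =
      SemidirectProduct.inl (DihedralGroup.r c) := by
    rw [← map_mul, DihedralGroup.sr_mul_sr, sub_zero, ← map_pow, DihedralGroup.r_one_pow]
  have hrels : ∀ w ∈ stmt5Rels r, FreeGroup.lift f w = 1 := by
    intro w hw
    simp only [stmt5Rels, Set.mem_insert_iff, Set.mem_singleton_iff] at hw
    rcases hw with rfl | rfl | rfl | rfl | rfl | rfl <;>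
      simp only [map_mul, map_pow, map_inv, FreeGroup.lift_apply_of, hf0, hf1, hf2]
    · rw [← map_pow]
      rw [show gg ^ 2 = 1 by rw [sq, hggsq], map_one]
    · rw [← map_pow, sq, DihedralGroup.sr_mul_sr, sub_self, ← DihedralGroup.one_def, map_one]
    · rw [← map_pow, sq, DihedralGroup.sr_mul_sr, sub_self, ← DihedralGroup.one_def, map_one]
    · rw [← map_mul, DihedralGroup.sr_mul_sr, sub_zero, ← map_pow, DihedralGroup.r_one_pow_n,
        map_one]
    · rw [hA 0, hB, mul_inv_cancel]
    · rw [hA 1, hB, mul_inv_cancel]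
  set Φ : PresentedGroup (stmt5Rels r) →* (DihedralGroup r ⋊[φ] Multiplicative (ZMod 2)) :=
    PresentedGroup.toGroup hrels with hΦdef
  have hΦ0 : Φ (.of 0) = SemidirectProduct.inr gg := PresentedGroup.toGroup.of hrels
  have hΦ1 : Φ (.of 1) = SemidirectProduct.inl (.sr 0) := PresentedGroup.toGroup.of hrels
  have hΦ2 : Φ (.of 2) = SemidirectProduct.inl (.sr 1) := PresentedGroup.toGroup.of hrels
  have hmk : ∀ w ∈ stmt5Rels r, (PresentedGroup.mk (stmt5Rels r)) w = 1 := fun w hw =>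
    (QuotientGroup.eq_one_iff _).mpr (Subgroup.subset_normalClosure hw)
  set σ : PresentedGroup (stmt5Rels r) := .of 0 with hσdef
  set τ : PresentedGroup (stmt5Rels r) := .of 1 with hτdef
  set u : PresentedGroup (stmt5Rels r) := .of 2 with hudef
  set ρ : PresentedGroup (stmt5Rels r) := τ * u with hρdef
  set z : PresentedGroup (stmt5Rels r) := ρ ^ (r / 2) with hzdef
  have hσsq : σ * σ = 1 := by
    have := hmk _ (show FreeGroup.of 0 ^ 2 ∈ stmt5Rels r by simp [stmt5Rels])
    rwa [map_pow, sq] at this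
  have hτsq : τ * τ = 1 := by
    have := hmk _ (show FreeGroup.of 1 ^ 2 ∈ stmt5Rels r by simp [stmt5Rels])
    rwa [map_pow, sq] at this
  have husq : u * u = 1 := by
    have := hmk _ (show FreeGroup.of 2 ^ 2 ∈ stmt5Rels r by simp [stmt5Rels])
    rwa [map_pow, sq] at this
  have hρr : ρ ^ r = 1 := by
    have := hmk _ (show (FreeGroup.of 1 * FreeGroup.of 2) ^ r ∈ stmt5Rels r by
      simp [stmt5Rels])
    rwa [map_pow, map_mul] at this
  have h5 : (σ * τ) * (σ * τ) = z := by
    have := hmk _ (show (FreeGroup.of 0 * FreeGroup.of 1) ^ 2 *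
        ((FreeGroup.of 1 * FreeGroup.of 2) ^ (r / 2))⁻¹ ∈ stmt5Rels r by simp [stmt5Rels])
    rw [map_mul, map_inv, map_pow, map_pow, map_mul, map_mul, mul_inv_eq_one] at this
    rw [← sq]
    exact this
  have h6 : (σ * u) * (σ * u) = z := by
    have := hmk _ (show (FreeGroup.of 0 * FreeGroup.of 2) ^ 2 *
        ((FreeGroup.of 1 * FreeGroup.of 2) ^ (r / 2))⁻¹ ∈ stmt5Rels r by simp [stmt5Rels])
    rw [map_mul, map_inv, map_pow, map_pow, map_mul, map_mul, mul_inv_eq_one] at this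
    rw [← sq]
    exact this
  have hσinv : σ⁻¹ = σ := inv_eq_of_mul_eq_one_right hσsq
  have hτinv : τ⁻¹ = τ := inv_eq_of_mul_eq_one_right hτsq
  have huinv : u⁻¹ = u := inv_eq_of_mul_eq_one_right husq
  have hc' : τ * ρ * τ = ρ⁻¹ := by
    rw [hρdef, mul_inv_rev, hτinv, huinv, ← mul_assoc, hτsq, one_mul]
  have hσsq2 : σ ^ 2 = 1 := by rw [sq]; exact hσsq
  have hστσ : σ * τ * σ = z * τ := by
    have h' : (σ * τ * σ) * τ = z := by rw [← h5]; group
    calc σ * τ * σ = ((σ * τ * σ) * τ) * τ⁻¹ := by group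
      _ = z * τ := by rw [h', hτinv]
  have hσuσ : σ * u * σ = z * u := by
    have h' : (σ * u * σ) * u = z := by rw [← h6]; group
    calc σ * u * σ = ((σ * u * σ) * u) * u⁻¹ := by group
      _ = z * u := by rw [h', huinv]
  have hτz : τ * z * τ = z⁻¹ := by
    have h1 : τ * ρ ^ (r / 2) * τ⁻¹ = (τ * ρ * τ⁻¹) ^ (r / 2) := (conj_pow).symm
    rw [hτinv] at h1
    rw [hzdef, h1, hc', inv_pow]
  have hzsq : z * z = 1 := by
    rw [hzdef, ← pow_add, ← two_mul, hdiv, hρr]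
  have hzinv : z⁻¹ = z := inv_eq_of_mul_eq_one_right hzsq
  have hzτ : z * τ = τ * z := by
    calc z * τ = τ * (τ * z * τ) := by rw [← mul_assoc, ← mul_assoc, hτsq, one_mul]
      _ = τ * z⁻¹ := by rw [hτz]
      _ = τ * z := by rw [hzinv]
  have hσρσ : σ * ρ * σ = ρ := by
    have expand : σ * ρ * σ = (σ * τ * σ) * (σ * u * σ) := by
      conv_rhs => rw [mul_assoc (σ * τ) σ (σ * u * σ), ← mul_assoc σ (σ * u) σ,
        ← mul_assoc σ σ u, hσsq, one_mul]
      rw [hρdef]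
      group
    rw [expand, hστσ, hσuσ]
    calc (z * τ) * (z * u) = z * (τ * z * τ) * (τ * u) := by
          rw [show z * (τ * z * τ) * (τ * u) = z * ((τ * z) * ((τ * τ) * u)) by group,
            hτsq, one_mul]
          group
      _ = z * z⁻¹ * (τ * u) := by rw [hτz]
      _ = ρ := by rw [mul_inv_cancel, one_mul, hρdef]
  have hσρnσ : ∀ n : ℕ, σ * ρ ^ n * σ = ρ ^ n := fun n => by
    have h1 : σ * ρ ^ n * σ⁻¹ = (σ * ρ * σ⁻¹) ^ n := (conj_pow).symm
    rw [hσinv] at h1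
    rw [h1, hσρσ]
  set ψ₁ : DihedralGroup r →* PresentedGroup (stmt5Rels r) :=
    Stmt5Aux.dihedralHom τ ρ hτsq hρr hc' with hψ₁def
  set ψ₂ : Multiplicative (ZMod 2) →* PresentedGroup (stmt5Rels r) :=
    Stmt5Aux.c2Hom σ hσsq2 with hψ₂def
  have hψ₂1 : ψ₂ gg = σ := Stmt5Aux.c2Hom_ofAdd_one _ _
  have hkey : ∀ a b : ZMod r, ρ ^ ((a + b).val) = ρ ^ a.val * ρ ^ b.val := fun a b => by
    rw [ZMod.val_add, Stmt5Aux.pow_mod_eq hρr, pow_add]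
  have hcz : ρ ^ (c.val) = z := by
    rw [hcdef, ZMod.val_natCast, Stmt5Aux.pow_mod_eq hρr, hzdef]
  have hzρ : ∀ n : ℕ, z * ρ ^ n = ρ ^ n * z := fun n => by
    rw [hzdef, ← pow_add, ← pow_add, Nat.add_comm]
  have hconj : ∀ n : ℕ, σ * (τ * ρ ^ n) * σ = z * τ * ρ ^ n := fun n => by
    have e1 : σ * (τ * ρ ^ n) * σ = MulAut.conj σ (τ * ρ ^ n) := by
      rw [MulAut.conj_apply, hσinv]
    rw [e1, map_mul, map_pow, MulAut.conj_apply, MulAut.conj_apply, hσinv, hστσ, hσρσ]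
  have hcompat : ∀ x : Multiplicative (ZMod 2),
      ψ₁.comp ((φ x).toMonoidHom) =
        (MulAut.conj (ψ₂ x)).toMonoidHom.comp ψ₁ := by
    intro x
    rcases (by decide : ∀ y : Multiplicative (ZMod 2), y = 1 ∨ y = Multiplicative.ofAdd 1) x
      with rfl | rfl
    · ext d
      simp [hψ₂def, Stmt5Aux.c2Hom_apply]
    · ext d
      simp only [MonoidHom.comp_apply, MulEquiv.coe_toMonoidHom, hφ1]
      rw [show ψ₂ (Multiplicative.ofAdd 1) = σ from hψ₂1]
      rcases d with i | i
      · rw [show φ (Multiplicative.ofAdd 1) = Stmt5Aux.dAut r from hφ1, Stmt5Aux.dAut_r, hψ₁def, Stmt5Aux.dihedralHom_r, MulAut.conj_apply, hσinv]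
        exact (hσρnσ i.val).symm
      · rw [show φ (Multiplicative.ofAdd 1) = Stmt5Aux.dAut r from hφ1, Stmt5Aux.dAut_sr, hψ₁def, Stmt5Aux.dihedralHom_sr, Stmt5Aux.dihedralHom_sr,
          MulAut.conj_apply, hσinv, ← hcdef, hkey, hcz, hconj i.val, hzτ, mul_assoc, hzρ]
  set Ψ : (DihedralGroup r ⋊[φ] Multiplicative (ZMod 2)) →* PresentedGroup (stmt5Rels r) :=
    SemidirectProduct.lift ψ₁ ψ₂ hcompat with hΨdef
  have hcomp : Ψ.comp Φ = MonoidHom.id (PresentedGroup (stmt5Rels r)) := by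
    apply PresentedGroup.ext
    intro k
    fin_cases k
    · show Ψ (Φ σ) = σ
      rw [hΦ0, hΨdef, SemidirectProduct.lift_inr, hψ₂1]
    · show Ψ (Φ τ) = τ
      rw [hΦ1, hΨdef, SemidirectProduct.lift_inl, hψ₁def, Stmt5Aux.dihedralHom_sr,
        ZMod.val_zero, pow_zero, mul_one]
    · show Ψ (Φ u) = u
      rw [hΦ2, hΨdef, SemidirectProduct.lift_inl, hψ₁def, Stmt5Aux.dihedralHom_sr,
        ZMod.val_one, pow_one, hρdef, ← mul_assoc, hτsq, one_mul]
  have hΨΦ : ∀ x, Ψ (Φ x) = x := fun x => DFunLike.congr_fun hcomp x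
  have hinj : Function.Injective Φ := fun a b hab => by
    rw [← hΨΦ a, ← hΨΦ b, hab]
  have hcast : ∀ i : ZMod r, ((i.val : ℕ) : ZMod r) = i := ZMod.natCast_rightInverse
  have hsurj : Function.Surjective Φ := by
    have hsl : ∀ d : DihedralGroup r, ∃ p, Φ p = SemidirectProduct.inl d := by
      rintro (i | i)
      · refine ⟨(PresentedGroup.of 1 * PresentedGroup.of 2) ^ i.val, ?_⟩
        rw [map_pow, map_mul, hΦ1, hΦ2, ← map_mul, DihedralGroup.sr_mul_sr, sub_zero,
          ← map_pow, DihedralGroup.r_one_pow, hcast i]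
      · refine ⟨PresentedGroup.of 1 * (PresentedGroup.of 1 * PresentedGroup.of 2) ^ i.val, ?_⟩
        rw [map_mul, map_pow, map_mul, hΦ1, hΦ2, ← map_mul, DihedralGroup.sr_mul_sr,
          sub_zero, ← map_pow, DihedralGroup.r_one_pow, hcast i, ← map_mul,
          DihedralGroup.sr_mul_r, zero_add]
    have hsrr : ∀ h : Multiplicative (ZMod 2), ∃ p, Φ p = SemidirectProduct.inr h := by
      intro h
      rcases (by decide : ∀ y : Multiplicative (ZMod 2), y = 1 ∨ y = Multiplicative.ofAdd 1) h
        with rfl | rfl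
      · exact ⟨1, by rw [map_one, map_one]⟩
      · exact ⟨.of 0, by rw [hΦ0, hggdef]⟩
    intro x
    obtain ⟨p1, hp1⟩ := hsl x.left
    obtain ⟨p2, hp2⟩ := hsrr x.right
    exact ⟨p1 * p2, by rw [map_mul, hp1, hp2, SemidirectProduct.inl_left_mul_inr_right]⟩
  have e : PresentedGroup (stmt5Rels r) ≃* (DihedralGroup r ⋊[φ] Multiplicative (ZMod 2)) :=
    MulEquiv.ofBijective Φ ⟨hinj, hsurj⟩
  constructor
  · have h1 : Nat.card (PresentedGroup (stmt5Rels r)) =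
        Nat.card (DihedralGroup r ⋊[φ] Multiplicative (ZMod 2)) := Nat.card_congr e.toEquiv
    have h2 : Nat.card (DihedralGroup r ⋊[φ] Multiplicative (ZMod 2)) =
        Nat.card (DihedralGroup r) * Nat.card (Multiplicative (ZMod 2)) := by
      rw [← Nat.card_prod]
      exact Nat.card_congr
        ⟨fun x => (x.left, x.right), fun p => ⟨p.1, p.2⟩, fun x => rfl, fun p => rfl⟩
    have h3 : Nat.card (Multiplicative (ZMod 2)) = 2 := by
      rw [Nat.card_congr (Multiplicative.toAdd), Nat.card_zmod]
    rw [h1, h2, h3, Nat.card_eq_fintype_card, DihedralGroup.card]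
    ring
  · exact ⟨φ, ⟨e⟩⟩
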